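/- Let xⁿ ∈ Q and x ∈ Q. Then x is a scheme update of xⁿ (i.e. x satisfies the fully discrete scheme equations) if and only if x minimizes J over Q, i.e. J(x) ≤ J(z) for all z ∈ Q. (Variational characterization of the scheme used in the proof of Theorem 4.1.) -/

import Mathlib

open Finset Filter

noncomputable section

/-- Forward difference onto cells: `(D_h l)_{i-1/2} = (l_i - l_{i-1})/h` (use index `i`, `1 ≤ i ≤ M`). -/
def DhOp (h : ℝ) (l : ℕ → ℝ) (i : ℕ) : ℝ := (l i - l (i - 1)) / h

/-- Difference of a cell function back onto nodes: `(d_h φ)_i = (φ_{i+1/2} - φ_{i-1/2})/h`;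
a cell function `φ` is encoded by `φ i = φ_{i-1/2}`. -/
def dhOp (h : ℝ) (φ : ℕ → ℝ) (i : ℕ) : ℝ := (φ (i + 1) - φ i) / h

/-- Central difference `D̃_h` on nodes. -/
def DtOp (M : ℕ) (h : ℝ) (l : ℕ → ℝ) (i : ℕ) : ℝ :=
  if i = 0 then (l 1 - l 0) / h
  else if i = M then (l M - l (M - 1)) / h
  else (l (i + 1) - l (i - 1)) / (2 * h)

/-- Node inner product `⟨l, g⟩_E`. -/
def ipE (M : ℕ) (h : ℝ) (l g : ℕ → ℝ) : ℝ :=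
  h * (l 0 * g 0 / 2 + (∑ i ∈ Finset.Ioo 0 M, l i * g i) + l M * g M / 2)

/-- Cell inner product `⟨φ, ψ⟩_C`. -/
def ipC (M : ℕ) (h : ℝ) (φ ψ : ℕ → ℝ) : ℝ :=
  h * ∑ i ∈ Finset.Icc 1 M, φ i * ψ i

/-- The admissible (ordered) set `Q`. -/
def inQ (M : ℕ) (X0 XM : ℝ) (l : ℕ → ℝ) : Prop :=
  l 0 = X0 ∧ l M = XM ∧ ∀ i, 1 ≤ i → i ≤ M → l (i - 1) < l i

/-- The closure `Q̄` of the admissible set. -/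
def inQbar (M : ℕ) (X0 XM : ℝ) (l : ℕ → ℝ) : Prop :=
  l 0 = X0 ∧ l M = XM ∧ ∀ i, 1 ≤ i → i ≤ M → l (i - 1) ≤ l i

/-- `Ŝ[x]_i = ⟨K(x_i - y), u₀(Y)⟩_E` for a kernel `K` (e.g. `K = W_c'`);
also used as `w[x]_i` when `K = W` itself. -/
def Shat (M : ℕ) (h : ℝ) (K : ℝ → ℝ) (u0 x : ℕ → ℝ) (i : ℕ) : ℝ :=
  ipE M h (fun j => K (x i - x j)) u0

/-- The cell function `G[x]_{i-1/2} = s·H'(s) - H(s)`, `s = u_{0,i-1/2}/(D_h x)_{i-1/2}`. -/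
def Gcell (h : ℝ) (H : ℝ → ℝ) (u0half x : ℕ → ℝ) (i : ℕ) : ℝ :=
  u0half i / DhOp h x i * deriv H (u0half i / DhOp h x i) - H (u0half i / DhOp h x i)

/-- The mobility coefficient `c[x]_i = u_{0,i}² / ((D̃_h x)_i · f(u_{0,i}/(D̃_h x)_i))`. -/
def cCoef (M : ℕ) (h : ℝ) (f : ℝ → ℝ) (u0 x : ℕ → ℝ) (i : ℕ) : ℝ :=
  u0 i ^ 2 / (DtOp M h x i * f (u0 i / DtOp M h x i))

/-- `xp` is a scheme update of `x`: the fully discrete convex-splitting scheme equations. -/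
def SchemeUpdate (M : ℕ) (h τ : ℝ) (H f Vc Ve Wc We : ℝ → ℝ)
    (u0 u0half x xp : ℕ → ℝ) : Prop :=
  ∀ i, 1 ≤ i → i ≤ M - 1 →
    cCoef M h f u0 x i * (xp i - x i) / τ =
      -dhOp h (Gcell h H u0half xp) i - u0 i * deriv Vc (xp i)
        + u0 i * deriv Ve (x i)
        - u0 i * Shat M h (deriv Wc) u0 xp i + u0 i * Shat M h (deriv We) u0 x i

/-- The discrete total energy `E_N`. -/
def EN (M : ℕ) (h : ℝ) (H V W : ℝ → ℝ) (u0 u0half x : ℕ → ℝ) : ℝ :=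
  h * ∑ i ∈ Finset.Icc 1 M, H (u0half i / DhOp h x i) * DhOp h x i
    + ipE M h u0 (fun i => V (x i))
    + 1 / 2 * ipE M h u0 (fun i => Shat M h W u0 x i)

/-- The convex part `E_{N,c}` of the discrete total energy. -/
def ENc (M : ℕ) (h : ℝ) (H Vc Wc : ℝ → ℝ) (u0 u0half x : ℕ → ℝ) : ℝ :=
  h * ∑ i ∈ Finset.Icc 1 M, H (u0half i / DhOp h x i) * DhOp h x i
    + ipE M h u0 (fun i => Vc (x i))
    + 1 / 2 * ipE M h u0 (fun i => Shat M h Wc u0 x i)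

/-- The concave (subtracted convex) part `E_{N,e}` of the discrete total energy. -/
def ENe (M : ℕ) (h : ℝ) (Ve We : ℝ → ℝ) (u0 x : ℕ → ℝ) : ℝ :=
  ipE M h u0 (fun i => Ve (x i)) + 1 / 2 * ipE M h u0 (fun i => Shat M h We u0 x i)

/-- The convex functional `J` whose minimizer over `Q` is the scheme update of `xn`. -/
def Jfun (M : ℕ) (h τ : ℝ) (H f Vc Ve Wc We : ℝ → ℝ)
    (u0 u0half xn z : ℕ → ℝ) : ℝ :=
  1 / (2 * τ) * ipE M h (fun i => cCoef M h f u0 xn i * (z i - xn i)) (fun i => z i - xn i)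
    + h * ∑ i ∈ Finset.Icc 1 M, H (u0half i / DhOp h z i) * DhOp h z i
    + ipE M h u0 (fun i => Vc (z i))
    + 1 / 2 * ipE M h u0 (fun i => Shat M h Wc u0 z i)
    - ipE M h (fun i => u0 i * deriv Ve (xn i)) z
    - ipE M h (fun i => u0 i * Shat M h (deriv We) u0 xn i) z


/-! ### Auxiliary machinery -/

private lemma tangent_le' {S : Set ℝ} {F : ℝ → ℝ} (hf : ConvexOn ℝ S F) {a b : ℝ}
    (ha : a ∈ S) (hb : b ∈ S) (hd : DifferentiableAt ℝ F a) :
    F a + deriv F a * (b - a) ≤ F b := by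
  rcases lt_trichotomy a b with hab | rfl | hab
  · have h2 : 0 < b - a := sub_pos.2 hab
    have h1 := hf.deriv_le_slope ha hb hab hd
    rw [slope_def_field, le_div_iff₀ h2] at h1
    nlinarith
  · simp
  · have h2 : 0 < a - b := sub_pos.2 hab
    have h1 := hf.slope_le_deriv hb ha hab hd
    rw [slope_def_field, div_le_iff₀ h2] at h1
    nlinarith

private lemma deriv_even_odd {W : ℝ → ℝ} (he : ∀ s : ℝ, W (-s) = W s) (s : ℝ) :
    deriv W (-s) = - deriv W s := by
  have h1 : deriv (fun x => W (-x)) s = - deriv W (-s) := deriv_comp_neg W s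
  have h2 : (fun x => W (-x)) = W := funext he
  rw [h2] at h1
  linarith

private lemma persp_le {H : ℝ → ℝ} (hH : ConvexOn ℝ (Set.Ioi 0) H)
    (hreg : ContDiffOn ℝ 1 H (Set.Ioi 0)) {u D E : ℝ}
    (hu : 0 < u) (hD : 0 < D) (hE : 0 < E) :
    H (u/D) * D + (H (u/D) - u/D * deriv H (u/D)) * (E - D) ≤ H (u/E) * E := by
  have ha : (0:ℝ) < u/D := div_pos hu hD
  have hb : (0:ℝ) < u/E := div_pos hu hE
  have hdiff : DifferentiableAt ℝ H (u/D) :=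
    ((hreg.differentiableOn one_ne_zero) _ (Set.mem_Ioi.2 ha)).differentiableAt
      (Ioi_mem_nhds ha)
  have ht := tangent_le' hH (Set.mem_Ioi.2 ha) (Set.mem_Ioi.2 hb) hdiff
  have h1 : u/D*D = u := div_mul_cancel₀ _ hD.ne'
  have h2 : u/E*E = u := div_mul_cancel₀ _ hE.ne'
  have key := mul_le_mul_of_nonneg_right ht hE.le
  have e1 : deriv H (u/D) * (u/E - u/D) * E
      = deriv H (u/D) * u - deriv H (u/D) * (u/D) * E := by
    have h3 : deriv H (u/D) * (u/E) * E = deriv H (u/D) * u := by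
      rw [mul_assoc, h2]
    nlinarith [h3]
  have e2 : u/D * deriv H (u/D) * D = deriv H (u/D) * u := by
    rw [mul_comm (u/D) (deriv H (u/D)), mul_assoc, h1]
  nlinarith [key, e1, e2]

/-- Endpoint/interior weight for the node inner product. -/
def wt (M i : ℕ) : ℝ := if i = 0 ∨ i = M then 1/2 else 1

lemma wt_pos (M i : ℕ) : 0 < wt M i := by unfold wt; split <;> norm_num

lemma Icc_eq (M : ℕ) (hM : 1 ≤ M) :
    Finset.Icc 0 M = insert 0 (insert M (Finset.Ioo 0 M)) := by
  ext i
  simp only [Finset.mem_Icc, Finset.mem_insert, Finset.mem_Ioo]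
  omega

lemma ipE_sum (M : ℕ) (hM : 1 ≤ M) (h : ℝ) (l g : ℕ → ℝ) :
    ipE M h l g = h * ∑ i ∈ Finset.Icc 0 M, wt M i * (l i * g i) := by
  have hMne : M ≠ 0 := by omega
  rw [Icc_eq M hM, Finset.sum_insert, Finset.sum_insert]
  · unfold ipE wt
    have h1 : ∑ i ∈ Finset.Ioo 0 M, (if i = 0 ∨ i = M then (1:ℝ)/2 else 1) * (l i * g i)
        = ∑ i ∈ Finset.Ioo 0 M, l i * g i := by
      refine Finset.sum_congr rfl fun i hi => ?_
      rw [Finset.mem_Ioo] at hi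
      rw [if_neg (by omega)]
      ring
    rw [h1]
    norm_num
    left
    ring
  · simp [Finset.mem_Ioo]
  · simp only [Finset.mem_insert, Finset.mem_Ioo]
    omega

lemma Shat_sum (M : ℕ) (hM : 1 ≤ M) (h : ℝ) (K : ℝ → ℝ) (u0 x : ℕ → ℝ) (i : ℕ) :
    Shat M h K u0 x i = ∑ j ∈ Finset.Icc 0 M, (h * wt M j * u0 j) * K (x i - x j) := by
  unfold Shat
  rw [ipE_sum M hM, Finset.mul_sum]
  exact Finset.sum_congr rfl fun j _ => by ring

lemma inQ_lt {M : ℕ} {X0 XM : ℝ} {l : ℕ → ℝ} (hl : inQ M X0 XM l)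
    {i j : ℕ} (hij : i < j) (hj : j ≤ M) : l i < l j := by
  obtain ⟨-, -, hmono⟩ := hl
  induction j with
  | zero => omega
  | succ k ih =>
    have hk := hmono (k+1) (by omega) hj
    simp only [Nat.add_sub_cancel] at hk
    rcases Nat.lt_or_ge i k with hik | hik
    · exact lt_trans (ih hik (by omega)) hk
    · have : i = k := by omega
      subst this; exact hk

lemma Dh_pos {M : ℕ} {X0 XM h : ℝ} {l : ℕ → ℝ} (hh : 0 < h) (hl : inQ M X0 XM l)
    {i : ℕ} (h1 : 1 ≤ i) (h2 : i ≤ M) : 0 < DhOp h l i := by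
  unfold DhOp
  apply div_pos _ hh
  have := inQ_lt hl (show i - 1 < i by omega) h2
  linarith

lemma Dt_pos {M : ℕ} {X0 XM h : ℝ} {l : ℕ → ℝ} (hh : 0 < h) (hM : 1 ≤ M)
    (hl : inQ M X0 XM l) {i : ℕ} (h2 : i ≤ M) : 0 < DtOp M h l i := by
  unfold DtOp
  split
  · apply div_pos _ hh
    have := inQ_lt hl (show 0 < 1 by omega) hM
    linarith
  · split
    · apply div_pos _ hh
      have := inQ_lt hl (show M - 1 < M by omega) le_rfl
      linarith
    · apply div_pos _ (by linarith)
      have := inQ_lt hl (show i - 1 < i + 1 by omega) (by omega)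
      linarith

lemma cCoef_pos {M : ℕ} {X0 XM h : ℝ} {f : ℝ → ℝ} {u0 l : ℕ → ℝ} (hh : 0 < h)
    (hM : 1 ≤ M) (hl : inQ M X0 XM l) (hf : ∀ s : ℝ, 0 < s → 0 < f s)
    {i : ℕ} (h2 : i ≤ M) (hu : 0 < u0 i) : 0 < cCoef M h f u0 l i := by
  have hDt := Dt_pos hh hM hl h2
  exact div_pos (pow_pos hu 2) (mul_pos hDt (hf _ (div_pos hu hDt)))

lemma Icc_one_eq (M : ℕ) (hM : 1 ≤ M) :
    Finset.Icc 1 M = insert M (Finset.Ioo 0 M) := by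
  ext i
  simp only [Finset.mem_Icc, Finset.mem_insert, Finset.mem_Ioo]
  omega

lemma Icc_zero_pred_eq (M : ℕ) (hM : 1 ≤ M) :
    Finset.Icc 0 (M-1) = insert 0 (Finset.Ioo 0 M) := by
  ext i
  simp only [Finset.mem_Icc, Finset.mem_insert, Finset.mem_Ioo]
  omega

lemma sum_shift (M : ℕ) (hM : 1 ≤ M) (F : ℕ → ℝ) :
    ∑ k ∈ Finset.Icc 1 M, F k = ∑ j ∈ Finset.Icc 0 (M-1), F (j+1) := by
  have himg : Finset.Icc 1 M = (Finset.Icc 0 (M-1)).image (fun j => j + 1) := by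
    ext i
    simp only [Finset.mem_image, Finset.mem_Icc]
    constructor
    · rintro ⟨hi1, hi2⟩; exact ⟨i - 1, by omega, by omega⟩
    · rintro ⟨j, ⟨-, hj⟩, rfl⟩; omega
  rw [himg, Finset.sum_image (fun a _ b _ hab => by omega)]

/-- Abel summation with vanishing boundary. -/
lemma abel_sum (M : ℕ) (hM : 1 ≤ M) (G w : ℕ → ℝ) (h0 : w 0 = 0) (hMw : w M = 0) :
    ∑ k ∈ Finset.Icc 1 M, G k * (w k - w (k-1))
      = ∑ i ∈ Finset.Ioo 0 M, (G i - G (i+1)) * w i := by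
  have e1 : ∑ k ∈ Finset.Icc 1 M, G k * (w k - w (k-1))
      = ∑ k ∈ Finset.Icc 1 M, G k * w k - ∑ k ∈ Finset.Icc 1 M, G k * w (k-1) := by
    rw [← Finset.sum_sub_distrib]
    exact Finset.sum_congr rfl fun k _ => by ring
  have e2 : ∑ k ∈ Finset.Icc 1 M, G k * w k = ∑ k ∈ Finset.Ioo 0 M, G k * w k := by
    rw [Icc_one_eq M hM, Finset.sum_insert (by simp)]
    rw [hMw]; ring
  have e3 : ∑ k ∈ Finset.Icc 1 M, G k * w (k-1)
      = ∑ j ∈ Finset.Ioo 0 M, G (j+1) * w j := by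
    rw [sum_shift M hM (fun k => G k * w (k-1))]
    have : ∀ j, G (j+1) * w ((j+1)-1) = G (j+1) * w j := fun j => by
      simp only [Nat.add_sub_cancel]
    simp only [this]
    rw [Icc_zero_pred_eq M hM, Finset.sum_insert (by simp)]
    rw [h0]; ring
  rw [e1, e2, e3, ← Finset.sum_sub_distrib]
  exact Finset.sum_congr rfl fun i _ => by ring

private lemma quad_ineq {c d w τ : ℝ} (hc : 0 ≤ c) (hτ : 0 < τ) :
    w * (c * d / τ) ≤ 1/(2*τ) * (c*(d+w)*(d+w) - c*d*d) := by
  have h1 : w * (c * d / τ) = (c*d*w)/τ := by ring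
  have h2 : 1/(2*τ) * (c*(d+w)*(d+w) - c*d*d) = (c*d*w)/τ + (c*(w*w))/(2*τ) := by
    field_simp
    ring
  rw [h1, h2]
  have h3 : 0 ≤ (c*(w*w))/(2*τ) :=
    div_nonneg (mul_nonneg hc (mul_self_nonneg w)) (by linarith)
  linarith

lemma ipE_sub (M : ℕ) (h : ℝ) (l g l' g' : ℕ → ℝ)
    (h0 : l 0 * g 0 = l' 0 * g' 0) (hMe : l M * g M = l' M * g' M) :
    ipE M h l g - ipE M h l' g'
      = ∑ i ∈ Finset.Ioo 0 M, h * (l i * g i - l' i * g' i) := by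
  unfold ipE
  rw [← Finset.mul_sum, Finset.sum_sub_distrib, h0, hMe]
  ring

/-- The scheme residual at node `i`. -/
def Rres (M : ℕ) (h τ : ℝ) (H f Vc Ve Wc We : ℝ → ℝ)
    (u0 u0half xn x : ℕ → ℝ) (i : ℕ) : ℝ :=
  cCoef M h f u0 xn i * (x i - xn i) / τ + dhOp h (Gcell h H u0half x) i
    + u0 i * deriv Vc (x i) + u0 i * Shat M h (deriv Wc) u0 x i
    - u0 i * deriv Ve (xn i) - u0 i * Shat M h (deriv We) u0 xn i

lemma key_ineq (M : ℕ) (hM : 2 ≤ M) (X0 XM : ℝ) (hX : X0 < XM)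
    (h : ℝ) (hh : h = (XM - X0) / (M : ℝ)) (τ : ℝ) (hτ : 0 < τ)
    (H f Vc Ve Wc We : ℝ → ℝ)
    (hHconv : ConvexOn ℝ (Set.Ioi 0) H) (hHreg : ContDiffOn ℝ 1 H (Set.Ioi 0))
    (hf : ∀ s : ℝ, 0 < s → 0 < f s)
    (hVcconv : ConvexOn ℝ Set.univ Vc) (hVcreg : ContDiff ℝ 1 Vc)
    (hWcconv : ConvexOn ℝ Set.univ Wc) (hWcreg : ContDiff ℝ 1 Wc)
    (hWceven : ∀ s : ℝ, Wc (-s) = Wc s)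
    (u0 u0half : ℕ → ℝ)
    (hu0 : ∀ i ≤ M, 0 < u0 i)
    (hu0half : ∀ i, 1 ≤ i → i ≤ M → 0 < u0half i)
    (xn x z : ℕ → ℝ) (hxn : inQ M X0 XM xn) (hx : inQ M X0 XM x)
    (hz : inQ M X0 XM z) :
    Jfun M h τ H f Vc Ve Wc We u0 u0half xn x
      + ∑ i ∈ Finset.Ioo 0 M, h * (z i - x i)
          * Rres M h τ H f Vc Ve Wc We u0 u0half xn x i
      ≤ Jfun M h τ H f Vc Ve Wc We u0 u0half xn z := by
  have hM1 : 1 ≤ M := by omega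
  have hMpos : (0:ℝ) < (M:ℝ) := by exact_mod_cast Nat.pos_of_ne_zero (by omega)
  have hhpos : 0 < h := by rw [hh]; exact div_pos (by linarith) hMpos
  have hz0 : z 0 = x 0 := by rw [hz.1, hx.1]
  have hzM : z M = x M := by rw [hz.2.1, hx.2.1]
  have hT1 : ∑ i ∈ Finset.Ioo 0 M, h * (z i - x i)
        * (cCoef M h f u0 xn i * (x i - xn i) / τ)
      ≤ 1/(2*τ) * ipE M h (fun i => cCoef M h f u0 xn i * (z i - xn i))
            (fun i => z i - xn i)
        - 1/(2*τ) * ipE M h (fun i => cCoef M h f u0 xn i * (x i - xn i))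
            (fun i => x i - xn i) := by
    have hdiff : 1/(2*τ) * ipE M h (fun i => cCoef M h f u0 xn i * (z i - xn i))
            (fun i => z i - xn i)
        - 1/(2*τ) * ipE M h (fun i => cCoef M h f u0 xn i * (x i - xn i))
            (fun i => x i - xn i)
        = ∑ i ∈ Finset.Ioo 0 M, 1/(2*τ) * (h * (cCoef M h f u0 xn i * (z i - xn i) * (z i - xn i)
            - cCoef M h f u0 xn i * (x i - xn i) * (x i - xn i))) := by
      rw [← mul_sub, ipE_sub M h _ _ _ _ (by rw [hz0]) (by rw [hzM]), Finset.mul_sum]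
    rw [hdiff]
    refine Finset.sum_le_sum fun i hi => ?_
    rw [Finset.mem_Ioo] at hi
    have hc : 0 < cCoef M h f u0 xn i :=
      cCoef_pos hhpos hM1 hxn hf (by omega) (hu0 i (by omega))
    have key := mul_le_mul_of_nonneg_left
      (quad_ineq (c := cCoef M h f u0 xn i) (d := x i - xn i) (w := z i - x i)
        hc.le hτ) hhpos.le
    have e : x i - xn i + (z i - x i) = z i - xn i := by ring
    rw [e] at key
    nlinarith [key]
  have hT2 : ∑ i ∈ Finset.Ioo 0 M, h * (z i - x i) * dhOp h (Gcell h H u0half x) i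
      ≤ h * ∑ k ∈ Finset.Icc 1 M, H (u0half k / DhOp h z k) * DhOp h z k
        - h * ∑ k ∈ Finset.Icc 1 M, H (u0half k / DhOp h x k) * DhOp h x k := by
    have hstep : ∀ k ∈ Finset.Icc 1 M,
        H (u0half k / DhOp h x k) * DhOp h x k
          + (- Gcell h H u0half x k) * (DhOp h z k - DhOp h x k)
        ≤ H (u0half k / DhOp h z k) * DhOp h z k := by
      intro k hk
      rw [Finset.mem_Icc] at hk
      have hu := hu0half k hk.1 hk.2
      have hDx := Dh_pos hhpos hx hk.1 hk.2
      have hDz := Dh_pos hhpos hz hk.1 hk.2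
      have hp := persp_le hHconv hHreg hu hDx hDz
      unfold Gcell
      nlinarith [hp]
    have hsum := Finset.sum_le_sum hstep
    rw [Finset.sum_add_distrib] at hsum
    have habel : h * ∑ k ∈ Finset.Icc 1 M,
          (- Gcell h H u0half x k) * (DhOp h z k - DhOp h x k)
        = ∑ i ∈ Finset.Ioo 0 M, h * (z i - x i) * dhOp h (Gcell h H u0half x) i := by
      have e : ∀ k ∈ Finset.Icc 1 M,
          (- Gcell h H u0half x k) * (DhOp h z k - DhOp h x k)
            = ((- Gcell h H u0half x k)
                * ((z k - x k) - (z (k-1) - x (k-1)))) / h := by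
        intro k _
        unfold DhOp
        ring
      rw [Finset.sum_congr rfl e, ← Finset.sum_div, mul_comm,
        div_mul_cancel₀ _ hhpos.ne']
      have e2 : ∀ k ∈ Finset.Icc 1 M,
          (- Gcell h H u0half x k) * ((z k - x k) - (z (k-1) - x (k-1)))
            = (- Gcell h H u0half x k)
                * ((fun i => z i - x i) k - (fun i => z i - x i) (k-1)) := by
        intro k _; rfl
      rw [Finset.sum_congr rfl e2,
        abel_sum M hM1 (fun k => - Gcell h H u0half x k) (fun i => z i - x i)
          (by show z 0 - x 0 = 0; rw [hz0]; ring) (by show z M - x M = 0; rw [hzM]; ring)]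
      refine Finset.sum_congr rfl fun i _ => ?_
      unfold dhOp
      field_simp
      ring
    rw [← habel]
    nlinarith [mul_le_mul_of_nonneg_left hsum hhpos.le]
  have hT3 : ∑ i ∈ Finset.Ioo 0 M, h * (z i - x i) * (u0 i * deriv Vc (x i))
      ≤ ipE M h u0 (fun i => Vc (z i)) - ipE M h u0 (fun i => Vc (x i)) := by
    rw [ipE_sub M h u0 (fun i => Vc (z i)) u0 (fun i => Vc (x i))
      (by show u0 0 * Vc (z 0) = u0 0 * Vc (x 0); rw [hz0]) (by show u0 M * Vc (z M) = u0 M * Vc (x M); rw [hzM])]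
    refine Finset.sum_le_sum fun i hi => ?_
    rw [Finset.mem_Ioo] at hi
    have hu : 0 < u0 i := hu0 i (by omega)
    have ht := tangent_le' hVcconv (Set.mem_univ (x i)) (Set.mem_univ (z i))
      ((hVcreg.differentiable one_ne_zero).differentiableAt)
    nlinarith [mul_le_mul_of_nonneg_left ht (mul_pos hhpos hu).le]
  have hT4 : ∑ i ∈ Finset.Ioo 0 M, h * (z i - x i)
        * (u0 i * Shat M h (deriv Wc) u0 x i)
      ≤ 1/2 * ipE M h u0 (fun i => Shat M h Wc u0 z i)
        - 1/2 * ipE M h u0 (fun i => Shat M h Wc u0 x i) := by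
    have hdW : Differentiable ℝ Wc := hWcreg.differentiable one_ne_zero
    set B : ℕ → ℝ := fun j => h * wt M j * u0 j with hB
    have hBnn : ∀ j ∈ Finset.Icc 0 M, 0 ≤ B j := by
      intro j hj
      rw [Finset.mem_Icc] at hj
      exact (mul_pos (mul_pos hhpos (wt_pos M j)) (hu0 j hj.2)).le
    have hP : ∀ y : ℕ → ℝ, ipE M h u0 (fun i => Shat M h Wc u0 y i)
        = ∑ i ∈ Finset.Icc 0 M, ∑ j ∈ Finset.Icc 0 M, B i * B j * Wc (y i - y j) := by
      intro y
      rw [ipE_sum M hM1]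
      simp only [Shat_sum M hM1, Finset.mul_sum]
      refine Finset.sum_congr rfl fun i _ => ?_
      refine Finset.sum_congr rfl fun j _ => ?_
      simp only [hB]
      ring
    have hpair : ∀ i ∈ Finset.Icc 0 M, (∀ j ∈ Finset.Icc 0 M,
        B i * B j * Wc (x i - x j)
          + B i * B j * deriv Wc (x i - x j) * ((z i - z j) - (x i - x j))
          ≤ B i * B j * Wc (z i - z j)) := by
      intro i hi j hj
      have ht := tangent_le' hWcconv (Set.mem_univ (x i - x j))
        (Set.mem_univ (z i - z j)) hdW.differentiableAt
      nlinarith [mul_le_mul_of_nonneg_left ht (mul_nonneg (hBnn i hi) (hBnn j hj))]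
    have hsum2 := Finset.sum_le_sum
      (fun i hi => Finset.sum_le_sum (hpair i hi))
    simp only [Finset.sum_add_distrib] at hsum2
    have hA : ∀ i, ∑ j ∈ Finset.Icc 0 M,
          B i * B j * deriv Wc (x i - x j) * (z i - x i)
        = (B i * (z i - x i)) * Shat M h (deriv Wc) u0 x i := by
      intro i
      rw [Shat_sum M hM1, Finset.mul_sum]
      exact Finset.sum_congr rfl fun j _ => by ring
    have hsplit2 : ∑ i ∈ Finset.Icc 0 M, ∑ j ∈ Finset.Icc 0 M,
          B i * B j * deriv Wc (x i - x j) * ((z i - z j) - (x i - x j))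
        = ∑ i ∈ Finset.Icc 0 M, ∑ j ∈ Finset.Icc 0 M,
            B i * B j * deriv Wc (x i - x j) * (z i - x i)
          - ∑ i ∈ Finset.Icc 0 M, ∑ j ∈ Finset.Icc 0 M,
            B i * B j * deriv Wc (x i - x j) * (z j - x j) := by
      rw [← Finset.sum_sub_distrib]
      refine Finset.sum_congr rfl fun i _ => ?_
      rw [← Finset.sum_sub_distrib]
      exact Finset.sum_congr rfl fun j _ => by ring
    have hneg : ∑ i ∈ Finset.Icc 0 M, ∑ j ∈ Finset.Icc 0 M,
          B i * B j * deriv Wc (x i - x j) * (z j - x j)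
        = - ∑ i ∈ Finset.Icc 0 M, ∑ j ∈ Finset.Icc 0 M,
            B i * B j * deriv Wc (x i - x j) * (z i - x i) := by
      rw [Finset.sum_comm]
      rw [← Finset.sum_neg_distrib]
      refine Finset.sum_congr rfl fun i _ => ?_
      rw [← Finset.sum_neg_distrib]
      refine Finset.sum_congr rfl fun j _ => ?_
      have hxx : x j - x i = -(x i - x j) := by ring
      rw [hxx, deriv_even_odd hWceven]
      ring
    have hArest : ∑ i ∈ Finset.Icc 0 M,
          (B i * (z i - x i)) * Shat M h (deriv Wc) u0 x i
        = ∑ i ∈ Finset.Ioo 0 M, h * (z i - x i)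
            * (u0 i * Shat M h (deriv Wc) u0 x i) := by
      rw [Icc_eq M hM1,
        Finset.sum_insert (by simp only [Finset.mem_insert, Finset.mem_Ioo]; omega),
        Finset.sum_insert (by simp only [Finset.mem_Ioo]; omega)]
      have e0 : z 0 - x 0 = 0 := by rw [hz0]; ring
      have eM : z M - x M = 0 := by rw [hzM]; ring
      rw [e0, eM]
      have hmid : ∑ i ∈ Finset.Ioo 0 M,
            (B i * (z i - x i)) * Shat M h (deriv Wc) u0 x i
          = ∑ i ∈ Finset.Ioo 0 M, h * (z i - x i)
              * (u0 i * Shat M h (deriv Wc) u0 x i) := by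
        refine Finset.sum_congr rfl fun i hi => ?_
        rw [Finset.mem_Ioo] at hi
        simp only [hB, wt]
        rw [if_neg (by omega)]
        ring
      rw [hmid]
      ring
    have h2A : ∑ i ∈ Finset.Icc 0 M, ∑ j ∈ Finset.Icc 0 M,
          B i * B j * deriv Wc (x i - x j) * ((z i - z j) - (x i - x j))
        = 2 * ∑ i ∈ Finset.Ioo 0 M, h * (z i - x i)
            * (u0 i * Shat M h (deriv Wc) u0 x i) := by
      rw [hsplit2, hneg, sub_neg_eq_add,
        Finset.sum_congr rfl (fun i _ => hA i), hArest]
      ring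
    rw [h2A] at hsum2
    rw [hP z, hP x]
    linarith [hsum2]
  have hT5 : ∑ i ∈ Finset.Ioo 0 M, h * (z i - x i) * (u0 i * deriv Ve (xn i))
      = ipE M h (fun i => u0 i * deriv Ve (xn i)) z
        - ipE M h (fun i => u0 i * deriv Ve (xn i)) x := by
    rw [ipE_sub M h _ z _ x (by rw [hz0]) (by rw [hzM])]
    exact Finset.sum_congr rfl fun i _ => by ring
  have hT6 : ∑ i ∈ Finset.Ioo 0 M, h * (z i - x i)
        * (u0 i * Shat M h (deriv We) u0 xn i)
      = ipE M h (fun i => u0 i * Shat M h (deriv We) u0 xn i) z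
        - ipE M h (fun i => u0 i * Shat M h (deriv We) u0 xn i) x := by
    rw [ipE_sub M h _ z _ x (by rw [hz0]) (by rw [hzM])]
    exact Finset.sum_congr rfl fun i _ => by ring
  have hsplit : ∑ i ∈ Finset.Ioo 0 M, h * (z i - x i)
        * Rres M h τ H f Vc Ve Wc We u0 u0half xn x i
      = ∑ i ∈ Finset.Ioo 0 M, h * (z i - x i)
            * (cCoef M h f u0 xn i * (x i - xn i) / τ)
        + ∑ i ∈ Finset.Ioo 0 M, h * (z i - x i) * dhOp h (Gcell h H u0half x) i
        + ∑ i ∈ Finset.Ioo 0 M, h * (z i - x i) * (u0 i * deriv Vc (x i))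
        + ∑ i ∈ Finset.Ioo 0 M, h * (z i - x i)
            * (u0 i * Shat M h (deriv Wc) u0 x i)
        - ∑ i ∈ Finset.Ioo 0 M, h * (z i - x i) * (u0 i * deriv Ve (xn i))
        - ∑ i ∈ Finset.Ioo 0 M, h * (z i - x i)
            * (u0 i * Shat M h (deriv We) u0 xn i) := by
    rw [← Finset.sum_add_distrib, ← Finset.sum_add_distrib, ← Finset.sum_add_distrib,
      ← Finset.sum_sub_distrib, ← Finset.sum_sub_distrib]
    exact Finset.sum_congr rfl fun i _ => by unfold Rres; ring
  unfold Jfun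
  rw [hsplit] at *
  linarith [hT1, hT2, hT3, hT4, hT5, hT6]
/-- Variational characterization of the scheme: `x ∈ Q` is a scheme update of `xⁿ`
iff `x` minimizes `J` over `Q`. -/
theorem scheme_iff_minimizer
    (M : ℕ) (hM : 2 ≤ M) (X0 XM : ℝ) (hX : X0 < XM)
    (h : ℝ) (hh : h = (XM - X0) / (M : ℝ)) (τ : ℝ) (hτ : 0 < τ)
    (H f Vc Ve Wc We : ℝ → ℝ)
    (hHconv : ConvexOn ℝ (Set.Ioi 0) H) (hHreg : ContDiffOn ℝ 1 H (Set.Ioi 0))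
    (hf : ∀ s : ℝ, 0 < s → 0 < f s)
    (hVcconv : ConvexOn ℝ Set.univ Vc) (hVcreg : ContDiff ℝ 1 Vc)
    (hVeconv : ConvexOn ℝ Set.univ Ve) (hVereg : ContDiff ℝ 1 Ve)
    (hWcconv : ConvexOn ℝ Set.univ Wc) (hWcreg : ContDiff ℝ 1 Wc)
    (hWeconv : ConvexOn ℝ Set.univ We) (hWereg : ContDiff ℝ 1 We)
    (hWceven : ∀ s : ℝ, Wc (-s) = Wc s) (hWeeven : ∀ s : ℝ, We (-s) = We s)
    (u0 u0half : ℕ → ℝ)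
    (hu0 : ∀ i ≤ M, 0 < u0 i)
    (hu0half : ∀ i, 1 ≤ i → i ≤ M → 0 < u0half i)
    (xn x : ℕ → ℝ) (hxn : inQ M X0 XM xn) (hx : inQ M X0 XM x) :
    SchemeUpdate M h τ H f Vc Ve Wc We u0 u0half xn x
      ↔ ∀ z : ℕ → ℝ, inQ M X0 XM z →
          Jfun M h τ H f Vc Ve Wc We u0 u0half xn x
            ≤ Jfun M h τ H f Vc Ve Wc We u0 u0half xn z := by

  have hM1 : 1 ≤ M := by omega
  have hMpos : (0:ℝ) < (M:ℝ) := by exact_mod_cast Nat.pos_of_ne_zero (by omega)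
  have hhpos : 0 < h := by rw [hh]; exact div_pos (by linarith) hMpos
  constructor
  · intro hs z hz
    have hk := key_ineq M hM X0 XM hX h hh τ hτ H f Vc Ve Wc We hHconv hHreg hf
      hVcconv hVcreg hWcconv hWcreg hWceven u0 u0half hu0 hu0half xn x z hxn hx hz
    have hzero : ∑ i ∈ Finset.Ioo 0 M,
        h * (z i - x i) * Rres M h τ H f Vc Ve Wc We u0 u0half xn x i = 0 := by
      refine Finset.sum_eq_zero fun i hi => ?_
      rw [Finset.mem_Ioo] at hi
      have hseq := hs i (by omega) (by omega)
      have hR : Rres M h τ H f Vc Ve Wc We u0 u0half xn x i = 0 := by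
        unfold Rres
        linarith [hseq]
      rw [hR, mul_zero]
    rw [hzero] at hk
    linarith [hk]
  · intro hmin i h1i h2i
    have hiM : i < M := by omega
    have h1 : 1 ≤ i := h1i
    set δ := min (x i - x (i-1)) (x (i+1) - x i) with hδ
    have hδpos : 0 < δ := by
      apply lt_min
      · have := inQ_lt hx (show i-1 < i by omega) (by omega); linarith
      · have := inQ_lt hx (show i < i+1 by omega) (by omega); linarith
    set zt : ℝ → (ℕ → ℝ) := fun t => Function.update x i (x i + t) with hztdef
    have hzt_ne : ∀ (t : ℝ) (j : ℕ), j ≠ i → zt t j = x j :=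
      fun t j hj => Function.update_of_ne hj _ _
    have hzt_i : ∀ t : ℝ, zt t i = x i + t := fun t => Function.update_self _ _ _
    have hztQ : ∀ t : ℝ, |t| < δ → inQ M X0 XM (zt t) := by
      intro t ht
      obtain ⟨habs1, habs2⟩ := abs_lt.1 ht
      have hd1 : δ ≤ x i - x (i-1) := min_le_left _ _
      have hd2 : δ ≤ x (i+1) - x i := min_le_right _ _
      refine ⟨?_, ?_, ?_⟩
      · rw [hzt_ne t 0 (by omega)]; exact hx.1
      · rw [hzt_ne t M (by omega)]; exact hx.2.1
      · intro j hj1 hj2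
        rcases eq_or_ne j i with rfl | hji
        · rw [hzt_i, hzt_ne t (j-1) (by omega)]
          linarith
        · rcases eq_or_ne j (i+1) with rfl | hji2
          · rw [hzt_ne t (i+1) (by omega), show (i+1) - 1 = i from rfl, hzt_i]
            linarith
          · rw [hzt_ne t j hji, hzt_ne t (j-1) (by omega)]
            exact hx.2.2 j hj1 hj2
    have hsign : ∀ t : ℝ, |t| < δ →
        0 ≤ t * Rres M h τ H f Vc Ve Wc We u0 u0half xn (zt t) i := by
      intro t ht
      have hq := hztQ t ht
      have hk := key_ineq M hM X0 XM hX h hh τ hτ H f Vc Ve Wc We hHconv hHreg hf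
        hVcconv hVcreg hWcconv hWcreg hWceven u0 u0half hu0 hu0half xn (zt t) x
        hxn hq hx
      have hcol : ∑ j ∈ Finset.Ioo 0 M,
            h * (x j - zt t j) * Rres M h τ H f Vc Ve Wc We u0 u0half xn (zt t) j
          = - (h * (t * Rres M h τ H f Vc Ve Wc We u0 u0half xn (zt t) i)) := by
        rw [Finset.sum_eq_single_of_mem i (Finset.mem_Ioo.2 ⟨by omega, hiM⟩)]
        · rw [hzt_i]; ring
        · intro j _ hji
          rw [hzt_ne t j hji]; ring
      rw [hcol] at hk
      have hmin' := hmin (zt t) hq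
      have h0 : h * 0 ≤ h * (t * Rres M h τ H f Vc Ve Wc We u0 u0half xn (zt t) i) := by
        rw [mul_zero]; linarith
      exact le_of_mul_le_mul_left h0 hhpos
    set Φ : ℝ → ℝ := fun s => s * deriv H s - H s with hΦdef
    set D1 : ℝ → ℝ := fun t => (x i + t - x (i-1))/h with hD1def
    set D2 : ℝ → ℝ := fun t => (x (i+1) - (x i + t))/h with hD2def
    set SW : ℝ → ℝ := fun t => h * (deriv Wc (x i + t - x 0) * u0 0 / 2
        + (∑ j ∈ Finset.Ioo 0 M,
            (if j = i then deriv Wc 0 else deriv Wc (x i + t - x j)) * u0 j)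
        + deriv Wc (x i + t - x M) * u0 M / 2) with hSWdef
    set G : ℝ → ℝ := fun t =>
        cCoef M h f u0 xn i * ((x i + t) - xn i)/τ
        + (Φ (u0half (i+1) / D2 t) - Φ (u0half i / D1 t))/h
        + u0 i * deriv Vc (x i + t)
        + u0 i * SW t
        - u0 i * deriv Ve (xn i)
        - u0 i * Shat M h (deriv We) u0 xn i with hGdef
    have hgG : ∀ t : ℝ, Rres M h τ H f Vc Ve Wc We u0 u0half xn (zt t) i = G t := by
      intro t
      unfold Rres
      have e2 : dhOp h (Gcell h H u0half (zt t)) i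
          = (Φ (u0half (i+1) / D2 t) - Φ (u0half i / D1 t))/h := by
        unfold dhOp Gcell DhOp
        rw [show i + 1 - 1 = i from rfl]
        rw [hzt_ne t (i+1) (by omega), hzt_ne t (i-1) (by omega), hzt_i t]
      have e3 : Shat M h (deriv Wc) u0 (zt t) i = SW t := by
        simp only [Shat, ipE]
        rw [hzt_i t, hzt_ne t 0 (by omega), hzt_ne t M (by omega)]
        have esum : ∑ j ∈ Finset.Ioo 0 M, deriv Wc (x i + t - zt t j) * u0 j
            = ∑ j ∈ Finset.Ioo 0 M,
                (if j = i then deriv Wc 0 else deriv Wc (x i + t - x j)) * u0 j := by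
          refine Finset.sum_congr rfl fun j _ => ?_
          rcases eq_or_ne j i with rfl | hji
          · rw [if_pos rfl, hzt_i t]
            norm_num
          · rw [if_neg hji, hzt_ne t j hji]
        rw [esum]
      rw [e2, e3, hzt_i t]
    have hΦcont : ContinuousOn Φ (Set.Ioi 0) := by
      simp only [hΦdef]
      exact (ContinuousOn.mul (fun s hs => (continuous_id.continuousAt).continuousWithinAt)
        (hHreg.continuousOn_deriv_of_isOpen isOpen_Ioi le_rfl)).sub hHreg.continuousOn
    have hD1cont : Continuous D1 := by simp only [hD1def]; fun_prop
    have hD2cont : Continuous D2 := by simp only [hD2def]; fun_prop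
    have hD10 : 0 < D1 0 := by
      simp only [hD1def]
      have := inQ_lt hx (show i-1 < i by omega) (by omega)
      apply div_pos _ hhpos
      linarith
    have hD20 : 0 < D2 0 := by
      simp only [hD2def]
      have := inQ_lt hx (show i < i+1 by omega) (by omega)
      apply div_pos _ hhpos
      linarith
    have hs1 : 0 < u0half i / D1 0 := div_pos (hu0half i (by omega) (by omega)) hD10
    have hs2 : 0 < u0half (i+1) / D2 0 := div_pos (hu0half (i+1) (by omega) (by omega)) hD20
    have hc2a : ContinuousAt (fun t => Φ (u0half i / D1 t)) 0 := by
      have hin : ContinuousAt (fun t => u0half i / D1 t) 0 :=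
        ContinuousAt.div continuousAt_const hD1cont.continuousAt hD10.ne'
      exact Filter.Tendsto.comp (hΦcont.continuousAt (Ioi_mem_nhds hs1)) hin
    have hc2b : ContinuousAt (fun t => Φ (u0half (i+1) / D2 t)) 0 := by
      have hin : ContinuousAt (fun t => u0half (i+1) / D2 t) 0 :=
        ContinuousAt.div continuousAt_const hD2cont.continuousAt hD20.ne'
      exact Filter.Tendsto.comp (hΦcont.continuousAt (Ioi_mem_nhds hs2)) hin
    have hSWcont : Continuous SW := by
      simp only [hSWdef]
      refine continuous_const.mul (Continuous.add (Continuous.add ?_ ?_) ?_)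
      · exact Continuous.div_const
          (((hWcreg.continuous_deriv le_rfl).comp (by fun_prop)).mul continuous_const) 2
      · refine continuous_finset_sum _ fun j _ => ?_
        rcases eq_or_ne j i with rfl | hji
        · simp only [if_pos]
          exact continuous_const
        · simp only [if_neg hji]
          exact ((hWcreg.continuous_deriv le_rfl).comp (by fun_prop)).mul continuous_const
      · exact Continuous.div_const
          (((hWcreg.continuous_deriv le_rfl).comp (by fun_prop)).mul continuous_const) 2
    have hGcont : ContinuousAt G 0 := by
      have q1 : ContinuousAt (fun t => cCoef M h f u0 xn i * ((x i + t) - xn i)/τ) 0 :=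
        ((continuous_const.mul (by fun_prop)).div_const τ).continuousAt
      have q2 : ContinuousAt
          (fun t => (Φ (u0half (i+1) / D2 t) - Φ (u0half i / D1 t))/h) 0 :=
        (hc2b.sub hc2a).div_const h
      have q3 : ContinuousAt (fun t => u0 i * deriv Vc (x i + t)) 0 :=
        (continuous_const.mul
          ((hVcreg.continuous_deriv le_rfl).comp (by fun_prop))).continuousAt
      have q4 : ContinuousAt (fun t => u0 i * SW t) 0 :=
        (continuous_const.mul hSWcont).continuousAt
      rw [hGdef]
      exact ((((q1.add q2).add q3).add q4).sub continuousAt_const).sub continuousAt_const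
    have hx0' : zt 0 = x := by
      funext j
      rcases eq_or_ne j i with rfl | hji
      · rw [hzt_i 0]; ring
      · exact hzt_ne 0 j hji
    have hge : 0 ≤ G 0 := by
      refine ge_of_tendsto (hGcont.tendsto.mono_left
        (nhdsWithin_le_nhds : nhdsWithin (0:ℝ) (Set.Ioi 0) ≤ nhds 0)) ?_
      filter_upwards [Ioo_mem_nhdsGT_of_mem (Set.mem_Ico.2 ⟨le_refl (0:ℝ), hδpos⟩)]
        with t ht
      have habs : |t| < δ := abs_lt.2 ⟨by linarith [ht.1], ht.2⟩
      have hsg := hsign t habs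
      rw [hgG t] at hsg
      nlinarith [ht.1]
    have hle : G 0 ≤ 0 := by
      refine le_of_tendsto (hGcont.tendsto.mono_left
        (nhdsWithin_le_nhds : nhdsWithin (0:ℝ) (Set.Iio 0) ≤ nhds 0)) ?_
      filter_upwards [Ioo_mem_nhdsLT_of_mem
        (Set.mem_Ioc.2 ⟨neg_lt_zero.2 hδpos, le_refl (0:ℝ)⟩)] with t ht
      have habs : |t| < δ := abs_lt.2 ⟨ht.1, by linarith [ht.2]⟩
      have hsg := hsign t habs
      rw [hgG t] at hsg
      nlinarith [ht.2]
    have hR0 : Rres M h τ H f Vc Ve Wc We u0 u0half xn x i = 0 := by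
      have hg := hgG 0
      rw [hx0'] at hg
      linarith
    unfold Rres at hR0
    linarith
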